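/- Combining the grid discretization and Hoeffding's bound: if K is L-Lipschitz, bounded by K(0), nonnegative, and X = [0,C]^D, then for every δ > 0, P(‖p̂_h − p_h‖_∞ > δ) ≤ 2 (4 C L √D/(δ h^{D+1}))^D exp(−n δ² h^{2D}/(2 K(0)²)). -/

import Mathlib

open MeasureTheory

section helpers
open Real ProbabilityTheory

lemma hoeffding_core (p u : ℝ) (hp0 : 0 ≤ p) (hp1 : p ≤ 1) :
    p * exp (-(1-p)*u) + (1-p) * exp (p*u) ≤ exp (u^2/8) := by
  rcases eq_or_lt_of_le hp0 with h0 | h0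
  · simp only [← h0, zero_mul, sub_zero, zero_add, one_mul, exp_zero]
    exact one_le_exp (by positivity)
  rcases eq_or_lt_of_le hp1 with h1 | h1
  · simp only [h1, sub_self, zero_mul, neg_zero, exp_zero, mul_one, zero_mul, add_zero]
    exact one_le_exp (by positivity)
  set q : ℝ := 1 - p with hq
  have hq0 : 0 < q := by rw [hq]; linarith
  have hpq : p + q = 1 := by rw [hq]; ring
  clear_value q
  set g : ℝ → ℝ := fun u => p * exp (-q*u) + q * exp (p*u) with hgdef
  have hgpos : ∀ v, 0 < g v := fun v => by
    have h1 := exp_pos (-q*v); have h2 := exp_pos (p*v)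
    simp only [hgdef]; positivity
  set g1 : ℝ → ℝ := fun u => p*q*(exp (p*u) - exp (-q*u)) with hg1def
  set g2 : ℝ → ℝ := fun u => p*q*(p * exp (p*u) + q * exp (-q*u)) with hg2def
  have d1 : ∀ v : ℝ, HasDerivAt (fun u : ℝ => exp (-q*u)) (exp (-q*v) * (-q)) v := by
    intro v
    exact HasDerivAt.exp (((hasDerivAt_id v).const_mul (-q)).congr_deriv (mul_one _))
  have d2 : ∀ v : ℝ, HasDerivAt (fun u : ℝ => exp (p*u)) (exp (p*v) * p) v := by
    intro v
    exact HasDerivAt.exp (((hasDerivAt_id v).const_mul p).congr_deriv (mul_one _))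
  have hg' : ∀ v, HasDerivAt g (g1 v) v := by
    intro v
    have := ((d1 v).const_mul p).add ((d2 v).const_mul q)
    exact this.congr_deriv (by simp only [hg1def]; ring)
  have hg1' : ∀ v, HasDerivAt g1 (g2 v) v := by
    intro v
    have := ((d2 v).sub (d1 v)).const_mul (p*q)
    exact this.congr_deriv (by simp only [hg2def]; ring)
  set F : ℝ → ℝ := fun u => u^2/8 - log (g u) with hFdef
  set φ : ℝ → ℝ := fun u => u/4 - g1 u / g u with hφdef
  have hF' : ∀ v, HasDerivAt F (φ v) v := by
    intro v
    have d3 : HasDerivAt (fun u : ℝ => u^2/8) (v/4) v := by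
      have := (hasDerivAt_pow 2 v).div_const 8
      exact this.congr_deriv (by norm_num; ring)
    exact d3.sub ((hg' v).log (hgpos v).ne')
  have hφ' : ∀ v, HasDerivAt φ (1/4 - (g2 v * g v - g1 v * g1 v)/(g v)^2) v := by
    intro v
    have d3 : HasDerivAt (fun u : ℝ => u/4) (1/4 : ℝ) v :=
      ((hasDerivAt_id v).div_const 4).congr_deriv (by norm_num)
    exact d3.sub ((hg1' v).div (hg' v) (hgpos v).ne')
  have hφnn : ∀ v, 0 ≤ 1/4 - (g2 v * g v - g1 v * g1 v)/(g v)^2 := by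
    intro v
    have hA := exp_pos (-q*v); have hB := exp_pos (p*v)
    have hid : g2 v * g v - g1 v * g1 v = (p*q)*(exp (p*v) * exp (-q*v)) := by
      simp only [hg1def, hg2def, hgdef]
      linear_combination (p*q*(exp (p*v) * exp (-q*v))*(p+q+1)) * hpq
    have key : (g2 v * g v - g1 v * g1 v)/(g v)^2 ≤ 1/4 := by
      rw [div_le_iff₀ (by positivity), hid]
      simp only [hgdef]
      have expand : (p * exp (-q*v) + q * exp (p*v))^2
          = (p * exp (-q*v) - q * exp (p*v))^2
            + 4*(p*q*(exp (p*v) * exp (-q*v))) := by ring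
      linarith [sq_nonneg (p * exp (-q*v) - q * exp (p*v)), expand]
    linarith
  have hmono : Monotone φ :=
    monotone_of_deriv_nonneg (fun v => (hφ' v).differentiableAt)
      (fun v => by rw [(hφ' v).deriv]; exact hφnn v)
  have hφ0 : φ 0 = 0 := by simp [hφdef, hg1def]
  have hg0 : g 0 = 1 := by
    simp only [hgdef, mul_zero, neg_zero, exp_zero, mul_one]
    exact hpq
  have hF0 : F 0 = 0 := by simp [hFdef, hg0]
  have hFnn : 0 ≤ F u := by
    rcases lt_trichotomy u 0 with hu | hu | hu
    · obtain ⟨c, hc, hceq⟩ := exists_hasDerivAt_eq_slope F φ hu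
        (fun x _ => (hF' x).continuousAt.continuousWithinAt) (fun x _ => hF' x)
      have hle : φ c ≤ 0 := hφ0 ▸ hmono hc.2.le
      rw [hceq, hF0] at hle
      have h1 : (0:ℝ) < 0 - u := by linarith
      have := (div_le_iff₀ h1).mp hle
      linarith
    · simp [hu, hF0]
    · obtain ⟨c, hc, hceq⟩ := exists_hasDerivAt_eq_slope F φ hu
        (fun x _ => (hF' x).continuousAt.continuousWithinAt) (fun x _ => hF' x)
      have hle : 0 ≤ φ c := hφ0 ▸ hmono hc.1.le
      rw [hceq, hF0] at hle
      have h1 : (0:ℝ) < u - 0 := by linarith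
      have := (le_div_iff₀ h1).mp hle
      linarith
  have hlog : log (g u) ≤ u^2/8 := by simp only [hFdef] at hFnn; linarith
  have hfin := (log_le_iff_le_exp (hgpos u)).mp hlog
  rw [hgdef] at hfin
  exact hfin

lemma chord_exp (t a b y : ℝ) (hab : a < b) (hy : y ∈ Set.Icc a b) :
    exp (t*y) ≤ (b - y)/(b - a) * exp (t*a) + (y - a)/(b - a) * exp (t*b) := by
  have hba : (0:ℝ) < b - a := by linarith
  have hl1 : 0 ≤ (b - y)/(b-a) := div_nonneg (by linarith [hy.2]) hba.le
  have hl2 : 0 ≤ (y - a)/(b-a) := div_nonneg (by linarith [hy.1]) hba.le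
  have hsum : (b - y)/(b-a) + (y - a)/(b-a) = 1 := by field_simp; ring
  have hcx := convexOn_exp.2 (Set.mem_univ (t*a)) (Set.mem_univ (t*b)) hl1 hl2 hsum
  have harg : (b - y)/(b-a) * (t*a) + (y - a)/(b-a) * (t*b) = t*y := by
    field_simp
    ring
  simpa [smul_eq_mul, harg] using hcx

lemma integrable_of_bdd {Ω : Type*} [MeasurableSpace Ω] {μ : Measure Ω} [IsProbabilityMeasure μ]
    {Y : Ω → ℝ} (hY : Measurable Y) {M : ℝ} (hbd : ∀ ω, |Y ω| ≤ M) : Integrable Y μ :=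
  Integrable.mono' (integrable_const M) hY.aestronglyMeasurable (Filter.Eventually.of_forall hbd)

lemma mgf_le_hoeffding {Ω : Type*} [MeasurableSpace Ω] (μ : Measure Ω) [IsProbabilityMeasure μ]
    (Y : Ω → ℝ) (hY : Measurable Y) (a b t : ℝ)
    (hbd : ∀ ω, Y ω ∈ Set.Icc a b) (hm : ∫ ω, Y ω ∂μ = 0) :
    mgf Y μ t ≤ exp (t^2 * (b-a)^2 / 8) := by
  have hYint : Integrable Y μ := integrable_of_bdd hY (M := |a| + |b|) (fun ω => by
    have h1 := (hbd ω).1; have h2 := (hbd ω).2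
    have := le_abs_self b; have := neg_abs_le a
    have := abs_nonneg a; have := abs_nonneg b
    rw [abs_le]; constructor <;> linarith)
  have ha : a ≤ 0 := by
    have := integral_mono (integrable_const a) hYint (fun ω => (hbd ω).1)
    simpa [hm] using this
  have hb : 0 ≤ b := by
    have := integral_mono hYint (integrable_const b) (fun ω => (hbd ω).2)
    simpa [hm] using this
  rcases eq_or_lt_of_le (ha.trans hb) with heq | hab
  · -- a = b, hence a = b = 0, Y ≡ 0
    have ha0 : a = 0 := le_antisymm ha (by linarith)
    have hb0 : b = 0 := by linarith
    have hY0 : ∀ ω, Y ω = 0 := fun ω => le_antisymm (hb0 ▸ (hbd ω).2) (ha0 ▸ (hbd ω).1)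
    have : mgf Y μ t = 1 := by
      rw [mgf]
      simp only [hY0, mul_zero, exp_zero]
      simp
    rw [this]
    exact one_le_exp (by positivity)
  have hba : (0:ℝ) < b - a := by linarith
  set c1 : ℝ := (b * exp (t*a) - a * exp (t*b))/(b-a) with hc1
  set c2 : ℝ := (exp (t*b) - exp (t*a))/(b-a) with hc2
  have hchord : ∀ ω, exp (t * Y ω) ≤ c1 + c2 * Y ω := by
    intro ω
    have := chord_exp t a b (Y ω) hab (hbd ω)
    have heq2 : (b - Y ω)/(b - a) * exp (t*a) + (Y ω - a)/(b - a) * exp (t*b)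
        = c1 + c2 * Y ω := by
      rw [hc1, hc2]
      field_simp
      ring
    linarith [heq2 ▸ this]
  have hint1 : Integrable (fun ω => exp (t * Y ω)) μ := by
    apply integrable_of_bdd ((hY.const_mul t).exp) (M := exp (|t| * (|a| + |b|)))
    intro ω
    rw [abs_of_pos (exp_pos _)]
    apply exp_le_exp.mpr
    calc t * Y ω ≤ |t * Y ω| := le_abs_self _
      _ = |t| * |Y ω| := abs_mul _ _
      _ ≤ |t| * (|a| + |b|) := by
          apply mul_le_mul_of_nonneg_left _ (abs_nonneg t)
          have h1 := (hbd ω).1; have h2 := (hbd ω).2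
          have := le_abs_self b; have := neg_abs_le a
          have := abs_nonneg a; have := abs_nonneg b
          rw [abs_le]; constructor <;> linarith
  have hint2 : Integrable (fun ω => c1 + c2 * Y ω) μ :=
    (integrable_const c1).add (hYint.const_mul c2)
  have hstep : mgf Y μ t ≤ c1 := by
    rw [mgf]
    calc ∫ ω, exp (t * Y ω) ∂μ ≤ ∫ ω, (c1 + c2 * Y ω) ∂μ :=
          integral_mono hint1 hint2 hchord
      _ = c1 := by
          rw [integral_add (integrable_const c1) (hYint.const_mul c2),
            integral_const_mul, hm]
          simp
  refine hstep.trans ?_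
  -- apply core with p = b/(b-a), u = t*(b-a)
  have hp0 : 0 ≤ b/(b-a) := div_nonneg hb hba.le
  have hp1 : b/(b-a) ≤ 1 := by
    rw [div_le_one hba]
    linarith
  have hcore := hoeffding_core (b/(b-a)) (t*(b-a)) hp0 hp1
  have e1 : -(1 - b/(b-a)) * (t*(b-a)) = t*a := by
    field_simp
    ring
  have e2 : (b/(b-a)) * (t*(b-a)) = t*b := by
    field_simp
  have e3 : (t*(b-a))^2/8 = t^2*(b-a)^2/8 := by ring
  rw [e1, e2, e3] at hcore
  have e4 : c1 = b/(b-a) * exp (t*a) + (1 - b/(b-a)) * exp (t*b) := by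
    rw [hc1]
    field_simp
    ring
  rw [e4]
  exact hcore

lemma hoeffding_ineq {Ω : Type*} [MeasurableSpace Ω] (μ : Measure Ω) [IsProbabilityMeasure μ]
    {n : ℕ} (Y : Fin n → Ω → ℝ) (hmeas : ∀ i, Measurable (Y i))
    (hindep : iIndepFun Y μ)
    (B : ℝ) (hB : 0 < B) (hbd : ∀ i ω, Y i ω ∈ Set.Icc 0 B) (θ : ℝ) (hθ : 0 < θ) :
    (μ {ω | (n:ℝ)*θ ≤ ∑ i, (Y i ω - ∫ ω', Y i ω' ∂μ)}).toReal
      ≤ exp (-(2*n*θ^2/B^2)) := by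
  set m : Fin n → ℝ := fun i => ∫ ω', Y i ω' ∂μ with hm
  set Z : Fin n → Ω → ℝ := fun i ω => Y i ω - m i with hZ
  have hZmeas : ∀ i, Measurable (Z i) := fun i => (hmeas i).sub measurable_const
  have hZindep : iIndepFun Z μ :=
    hindep.comp (fun i y => y - m i) (fun i => measurable_id.sub measurable_const)
  set lam : ℝ := 4*θ/B^2 with hlam
  have hlam0 : 0 ≤ lam := by positivity
  have hYint : ∀ i, Integrable (Y i) μ := fun i =>
    integrable_of_bdd (hmeas i) (M := B) (fun ω => by
      have h1 := (hbd i ω).1; have h2 := (hbd i ω).2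
      rw [abs_le]; constructor <;> linarith)
  have hZbd : ∀ i ω, Z i ω ∈ Set.Icc (-(m i)) (B - m i) := fun i ω =>
    ⟨by simp only [hZ]; linarith [(hbd i ω).1], by simp only [hZ]; linarith [(hbd i ω).2]⟩
  have hZint0 : ∀ i, ∫ ω, Z i ω ∂μ = 0 := fun i => by
    simp only [hZ]
    rw [integral_sub (hYint i) (integrable_const _), integral_const]
    simp [hm]
  have hmgf : ∀ i, mgf (Z i) μ lam ≤ exp (lam^2*B^2/8) := fun i => by
    have := mgf_le_hoeffding μ (Z i) (hZmeas i) (-(m i)) (B - m i) lam (hZbd i) (hZint0 i)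
    have e : (B - m i - -(m i)) = B := by ring
    rwa [e] at this
  have hexpint : ∀ i, Integrable (fun ω => exp (lam * Z i ω)) μ := fun i =>
    integrable_of_bdd ((((hZmeas i)).const_mul lam).exp)
      (M := exp (lam * B + lam * |m i|)) (fun ω => by
        rw [abs_of_pos (exp_pos _)]
        apply exp_le_exp.mpr
        have h1 := (hZbd i ω).2
        have h2 : lam * Z i ω ≤ lam * (B - m i) := mul_le_mul_of_nonneg_left h1 hlam0
        have h3 : -(m i) ≤ |m i| := neg_le_abs _
        nlinarith [hlam0])
  have hXint : Integrable (fun ω => exp (lam * (∑ i, Z i) ω)) μ :=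
    hZindep.integrable_exp_mul_sum hZmeas (fun i _ => hexpint i)
  have hcher := measure_ge_le_exp_mul_mgf (μ := μ) (X := ∑ i, Z i) (t := lam)
    ((n:ℝ)*θ) hlam0 hXint
  rw [hZindep.mgf_sum hZmeas] at hcher
  have hset : {ω | (n:ℝ)*θ ≤ ∑ i, (Y i ω - m i)} = {ω | (n:ℝ)*θ ≤ (∑ i, Z i) ω} := by
    ext ω
    simp [hZ]
  rw [hset]
  refine hcher.trans ?_
  calc exp (-lam * ((n:ℝ)*θ)) * ∏ i, mgf (Z i) μ lam
      ≤ exp (-lam * ((n:ℝ)*θ)) * ∏ _i : Fin n, exp (lam^2*B^2/8) := by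
        apply mul_le_mul_of_nonneg_left _ (exp_pos _).le
        exact Finset.prod_le_prod (fun i _ => mgf_nonneg) (fun i _ => hmgf i)
    _ = exp (-lam * ((n:ℝ)*θ) + (n:ℝ)*(lam^2*B^2/8)) := by
        rw [Finset.prod_const, Finset.card_univ, Fintype.card_fin, ← exp_nat_mul, ← exp_add]
    _ = exp (-(2*n*θ^2/B^2)) := by
        congr 1
        rw [hlam]
        field_simp
        ring

end helpers

section main
open Real ProbabilityTheory

set_option maxHeartbeats 1000000 in
/-- Combining the grid discretization and Hoeffding's bound: if `K` is
`L`-Lipschitz on `[0,∞)`, nonnegative and bounded by `K(0)`, and `P` is supported in the cube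
`X = [0,C]^D`, then for every `δ > 0` the kernel density estimator satisfies
`P(sup_{x ∈ X} |p̂_h(x) - p_h(x)| > δ)
  ≤ 2 (4 C L √D/(δ h^(D+1)))^D exp(-n δ² h^(2D)/(2 K(0)²))`. -/
theorem stmt_19 {D : ℕ} (hD : 0 < D) (Ω : Type*) [MeasurableSpace Ω] (μ : Measure Ω)
    [IsProbabilityMeasure μ]
    (P : Measure (EuclideanSpace ℝ (Fin D))) [IsProbabilityMeasure P]
    (C : ℝ) (hC : 0 < C)
    (hsupp : P {u : EuclideanSpace ℝ (Fin D) | ∀ i, u i ∈ Set.Icc (0 : ℝ) C} = 1)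
    (n : ℕ) (hn : 0 < n) (X : Fin n → Ω → EuclideanSpace ℝ (Fin D))
    (hmeas : ∀ i, Measurable (X i))
    (hiid : ProbabilityTheory.iIndepFun X μ)
    (hlaw : ∀ i, Measure.map (X i) μ = P)
    (K : ℝ → ℝ) (L : ℝ) (hL : 0 < L) (hK0 : 0 < K 0)
    (hKpos : ∀ s : ℝ, 0 ≤ s → 0 ≤ K s) (hKbd : ∀ s : ℝ, 0 ≤ s → K s ≤ K 0)
    (hKlip : ∀ a b : ℝ, 0 ≤ a → 0 ≤ b → |K a - K b| ≤ L * |a - b|)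
    (h δ : ℝ) (hh : 0 < h) (hδ : 0 < δ) :
    (μ {ω | δ <
        ⨆ x ∈ {u : EuclideanSpace ℝ (Fin D) | ∀ i, u i ∈ Set.Icc (0 : ℝ) C},
          |(1 / (n * h ^ D) : ℝ) * ∑ i : Fin n, K (‖x - X i ω‖ / h) -
            (1 / h ^ D) * ∫ u, K (‖x - u‖ / h) ∂P|}).toReal ≤
      2 * (4 * C * L * Real.sqrt D / (δ * h ^ (D + 1))) ^ D *
        Real.exp (-(n * δ ^ 2 * h ^ (2 * D)) / (2 * K 0 ^ 2)) := by
  classical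
  have hDR : (0:ℝ) < D := by exact_mod_cast hD
  have hsD : 0 < Real.sqrt D := Real.sqrt_pos.mpr hDR
  have hhD : (0:ℝ) < h ^ D := pow_pos hh D
  have hhD1 : (0:ℝ) < h ^ (D+1) := pow_pos hh (D+1)
  have hnR : (0:ℝ) < n := by exact_mod_cast hn
  set S : Set (EuclideanSpace ℝ (Fin D)) := {u | ∀ i, u i ∈ Set.Icc (0:ℝ) C} with hSdef
  set F : EuclideanSpace ℝ (Fin D) → Ω → ℝ := fun x ω =>
    (1 / (n * h ^ D) : ℝ) * ∑ i : Fin n, K (‖x - X i ω‖ / h) -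
      (1 / h ^ D) * ∫ u, K (‖x - u‖ / h) ∂P with hFdef
  have hgoal : {ω | δ <
        ⨆ x ∈ S, |(1 / (n * h ^ D) : ℝ) * ∑ i : Fin n, K (‖x - X i ω‖ / h) -
            (1 / h ^ D) * ∫ u, K (‖x - u‖ / h) ∂P|}
      = {ω | δ < ⨆ x ∈ S, |F x ω|} := rfl
  rw [hgoal]
  set ε : ℝ := δ * h^(D+1) / (2 * L * Real.sqrt D) with hεdef
  have hε : 0 < ε := by positivity
  -- basic kernel facts
  set Kc : ℝ → ℝ := fun s => K |s| with hKc
  have hKcK : ∀ s : ℝ, 0 ≤ s → Kc s = K s := fun s hs => by rw [hKc]; simp [abs_of_nonneg hs]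
  have hKcCont : Continuous Kc := by
    have : LipschitzWith (Real.toNNReal L) Kc := by
      apply LipschitzWith.of_dist_le_mul
      intro a b
      rw [Real.dist_eq, Real.dist_eq, Real.coe_toNNReal L hL.le]
      calc |Kc a - Kc b| ≤ L * abs (|a| - |b|) := hKlip _ _ (abs_nonneg _) (abs_nonneg _)
        _ ≤ L * |a - b| := mul_le_mul_of_nonneg_left (abs_abs_sub_abs_le_abs_sub a b) hL.le
    exact this.continuous
  have hgmeas : ∀ x : EuclideanSpace ℝ (Fin D),
      Measurable (fun u : EuclideanSpace ℝ (Fin D) => K (‖x - u‖ / h)) := by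
    intro x
    have hcont : Continuous (fun u : EuclideanSpace ℝ (Fin D) => Kc (‖x - u‖ / h)) :=
      hKcCont.comp (((continuous_const.sub continuous_id).norm).div_const h)
    have : (fun u : EuclideanSpace ℝ (Fin D) => K (‖x - u‖ / h))
        = fun u => Kc (‖x - u‖ / h) := by
      funext u
      rw [hKcK _ (by positivity)]
    rw [this]
    exact hcont.measurable
  have hgbd : ∀ (x u : EuclideanSpace ℝ (Fin D)), K (‖x - u‖ / h) ∈ Set.Icc 0 (K 0) :=
    fun x u => ⟨hKpos _ (by positivity), hKbd _ (by positivity)⟩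
  have hgint : ∀ x : EuclideanSpace ℝ (Fin D),
      Integrable (fun u => K (‖x - u‖ / h)) P := by
    intro x
    exact integrable_of_bdd (hgmeas x) (M := K 0) (fun u => by
      rw [abs_of_nonneg (hgbd x u).1]; exact (hgbd x u).2)
  -- distance comparison lemmas
  have hKdx : ∀ (x y v : EuclideanSpace ℝ (Fin D)),
      |K (‖x - v‖ / h) - K (‖y - v‖ / h)| ≤ L * ‖x - y‖ / h := by
    intro x y v
    calc |K (‖x - v‖ / h) - K (‖y - v‖ / h)| ≤ L * |‖x - v‖/h - ‖y - v‖/h| :=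
          hKlip _ _ (by positivity) (by positivity)
      _ ≤ L * ‖x - y‖ / h := by
          rw [div_sub_div_same, abs_div, abs_of_pos hh, mul_div_assoc]
          apply mul_le_mul_of_nonneg_left _ hL.le
          apply div_le_div_of_nonneg_right _ hh.le
          calc |‖x - v‖ - ‖y - v‖| ≤ ‖(x - v) - (y - v)‖ := abs_norm_sub_norm_le _ _
            _ = ‖x - y‖ := by rw [sub_sub_sub_cancel_right]
  have hKdu : ∀ (x u v : EuclideanSpace ℝ (Fin D)),
      |K (‖x - u‖ / h) - K (‖x - v‖ / h)| ≤ L * ‖u - v‖ / h := by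
    intro x u v
    calc |K (‖x - u‖ / h) - K (‖x - v‖ / h)| ≤ L * |‖x - u‖/h - ‖x - v‖/h| :=
          hKlip _ _ (by positivity) (by positivity)
      _ ≤ L * ‖u - v‖ / h := by
          rw [div_sub_div_same, abs_div, abs_of_pos hh, mul_div_assoc]
          apply mul_le_mul_of_nonneg_left _ hL.le
          apply div_le_div_of_nonneg_right _ hh.le
          calc |‖x - u‖ - ‖x - v‖| ≤ ‖(x - u) - (x - v)‖ := abs_norm_sub_norm_le _ _
            _ = ‖v - u‖ := by congr 1; abel
            _ = ‖u - v‖ := norm_sub_rev _ _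
  -- oscillation of F in x
  have hosc : ∀ (x y : EuclideanSpace ℝ (Fin D)) (ω : Ω),
      |F x ω - F y ω| ≤ 2 * L * ‖x - y‖ / h^(D+1) := by
    intro x y ω
    have hsum : |(1 / (n * h ^ D) : ℝ) * ∑ i : Fin n, K (‖x - X i ω‖ / h)
        - (1 / (n * h ^ D) : ℝ) * ∑ i : Fin n, K (‖y - X i ω‖ / h)|
          ≤ L * ‖x - y‖ / h^(D+1) := by
      rw [← mul_sub, abs_mul, abs_of_pos (by positivity : (0:ℝ) < 1/(n*h^D)),
        ← Finset.sum_sub_distrib]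
      calc (1/((n:ℝ)*h^D)) * |∑ i : Fin n, (K (‖x - X i ω‖ / h) - K (‖y - X i ω‖ / h))|
          ≤ (1/((n:ℝ)*h^D)) * ∑ i : Fin n, |K (‖x - X i ω‖ / h) - K (‖y - X i ω‖ / h)| := by
            apply mul_le_mul_of_nonneg_left (Finset.abs_sum_le_sum_abs _ _) (by positivity)
        _ ≤ (1/((n:ℝ)*h^D)) * ∑ _i : Fin n, (L * ‖x - y‖ / h) := by
            apply mul_le_mul_of_nonneg_left
              (Finset.sum_le_sum (fun i _ => hKdx x y (X i ω))) (by positivity)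
        _ = L * ‖x - y‖ / h^(D+1) := by
            rw [Finset.sum_const, Finset.card_univ, Fintype.card_fin, nsmul_eq_mul, pow_succ]
            field_simp
    have hint : |(1 / h ^ D : ℝ) * ∫ u, K (‖x - u‖ / h) ∂P
        - (1 / h ^ D : ℝ) * ∫ u, K (‖y - u‖ / h) ∂P| ≤ L * ‖x - y‖ / h^(D+1) := by
      rw [← mul_sub, abs_mul, abs_of_pos (by positivity : (0:ℝ) < 1/h^D),
        ← integral_sub (hgint x) (hgint y)]
      calc (1/h^D) * |∫ u, (K (‖x - u‖ / h) - K (‖y - u‖ / h)) ∂P|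
          ≤ (1/h^D) * ∫ u, |K (‖x - u‖ / h) - K (‖y - u‖ / h)| ∂P := by
            apply mul_le_mul_of_nonneg_left _ (by positivity)
            simpa [Real.norm_eq_abs] using
              norm_integral_le_integral_norm (μ := P)
                (fun u => K (‖x - u‖ / h) - K (‖y - u‖ / h))
        _ ≤ (1/h^D) * ∫ _u, (L * ‖x - y‖ / h) ∂P := by
            apply mul_le_mul_of_nonneg_left _ (by positivity)
            exact integral_mono ((hgint x).sub (hgint y)).abs (integrable_const _)
              (fun u => hKdx x y u)
        _ = L * ‖x - y‖ / h^(D+1) := by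
            rw [integral_const, probReal_univ, smul_eq_mul, one_mul,
              pow_succ]
            field_simp
            try ring
    have heq : F x ω - F y ω
        = ((1 / (n * h ^ D) : ℝ) * ∑ i : Fin n, K (‖x - X i ω‖ / h)
            - (1 / (n * h ^ D) : ℝ) * ∑ i : Fin n, K (‖y - X i ω‖ / h))
          - ((1 / h ^ D : ℝ) * ∫ u, K (‖x - u‖ / h) ∂P
            - (1 / h ^ D : ℝ) * ∫ u, K (‖y - u‖ / h) ∂P) := by
      simp only [hFdef]
      ring
    rw [heq]
    refine (abs_sub _ _).trans ?_
    have : 2 * L * ‖x - y‖ / h^(D+1) = L * ‖x - y‖ / h^(D+1) + L * ‖x - y‖ / h^(D+1) := by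
      ring
    rw [this]
    exact add_le_add hsum hint
  -- coordinatewise distance bound
  have hnormle : ∀ (u v : EuclideanSpace ℝ (Fin D)) (r : ℝ), 0 ≤ r →
      (∀ i, |u i - v i| ≤ r) → ‖u - v‖ ≤ Real.sqrt D * r := by
    intro u v r hr hcoord
    calc ‖u - v‖ = Real.sqrt (∑ i, ‖(u - v) i‖^2) := EuclideanSpace.norm_eq _
      _ ≤ Real.sqrt ((D:ℝ) * r^2) := by
          apply Real.sqrt_le_sqrt
          calc ∑ i, ‖(u - v) i‖^2 ≤ ∑ _i : Fin D, r^2 := by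
                apply Finset.sum_le_sum
                intro i _
                have h1 : ‖(u - v) i‖ = |u i - v i| := by
                  rw [PiLp.sub_apply, Real.norm_eq_abs]
                rw [h1]
                have h2 := hcoord i
                nlinarith [abs_nonneg (u i - v i)]
            _ = (D:ℝ) * r^2 := by
                rw [Finset.sum_const, Finset.card_univ, Fintype.card_fin, nsmul_eq_mul]
      _ = Real.sqrt D * r := by
          rw [Real.sqrt_mul hDR.le, Real.sqrt_sq hr]
  by_cases hcase : C ≤ 2 * ε
  · -- small cube: the event has measure zero
    have hSmeas : MeasurableSet S := by
      have : S = ⋂ i : Fin D, (fun u : EuclideanSpace ℝ (Fin D) => u i) ⁻¹' Set.Icc 0 C := by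
        ext u
        simp [hSdef, Set.mem_iInter]
      rw [this]
      exact MeasurableSet.iInter (fun i => (EuclideanSpace.proj i : EuclideanSpace ℝ (Fin D) →L[ℝ] ℝ).continuous.measurable measurableSet_Icc)
    have haeP : ∀ᵐ u ∂P, u ∈ S := by
      rw [Filter.eventually_iff, mem_ae_iff]
      have : {u : EuclideanSpace ℝ (Fin D) | u ∈ S}ᶜ = Sᶜ := rfl
      rw [this, measure_compl hSmeas (measure_ne_top _ _), hsupp, measure_univ, tsub_self]
    have hzero : μ {ω | δ < ⨆ x ∈ S, |F x ω|} = 0 := by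
      -- on the full-measure set where all X i ω ∈ S, the sup is at most δ
      set G : Set Ω := ⋂ i : Fin n, (X i) ⁻¹' S with hGdef
      have hGsub : {ω | δ < ⨆ x ∈ S, |F x ω|} ⊆ ⋃ i : Fin n, ((X i) ⁻¹' S)ᶜ := by
        intro ω hω
        by_contra hnot
        simp only [Set.mem_iUnion, not_exists, Set.mem_compl_iff, not_not,
          Set.mem_preimage] at hnot
        have hbF : ∀ x ∈ S, |F x ω| ≤ δ := by
          intro x hx
          have hre : F x ω = (1/((n:ℝ)*h^D)) *
              ∑ i : Fin n, (K (‖x - X i ω‖ / h) - ∫ u, K (‖x - u‖ / h) ∂P) := by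
            simp only [hFdef]
            rw [Finset.sum_sub_distrib, Finset.sum_const, Finset.card_univ, Fintype.card_fin,
              nsmul_eq_mul]
            field_simp
          have hterm : ∀ i : Fin n,
              |K (‖x - X i ω‖ / h) - ∫ u, K (‖x - u‖ / h) ∂P| ≤ L * (Real.sqrt D * C) / h := by
            intro i
            have hconst : K (‖x - X i ω‖ / h) - ∫ u, K (‖x - u‖ / h) ∂P
                = ∫ u, (K (‖x - X i ω‖ / h) - K (‖x - u‖ / h)) ∂P := by
              rw [integral_sub (integrable_const _) (hgint x), integral_const, probReal_univ,
                one_smul]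
            rw [hconst, ← Real.norm_eq_abs]
            have hstep : ‖∫ u, (K (‖x - X i ω‖ / h) - K (‖x - u‖ / h)) ∂P‖
                ≤ ∫ _u, (L * (Real.sqrt D * C) / h) ∂P := by
              apply norm_integral_le_of_norm_le (integrable_const (L * (Real.sqrt D * C) / h))
              filter_upwards [haeP] with u hu
              rw [Real.norm_eq_abs]
              calc |K (‖x - X i ω‖ / h) - K (‖x - u‖ / h)| ≤ L * ‖X i ω - u‖ / h :=
                    hKdu x (X i ω) u
                _ ≤ L * (Real.sqrt D * C) / h := by
                    apply div_le_div_of_nonneg_right _ hh.le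
                    apply mul_le_mul_of_nonneg_left _ hL.le
                    apply hnormle _ _ _ hC.le
                    intro i'
                    have h1 := (hnot i i').1; have h2 := (hnot i i').2
                    have h3 := (hu i').1; have h4 := (hu i').2
                    rw [abs_le]; constructor <;> linarith
            refine hstep.trans ?_
            rw [integral_const, probReal_univ, one_smul]
          calc |F x ω| ≤ (1/((n:ℝ)*h^D)) *
                ∑ _i : Fin n, (L * (Real.sqrt D * C) / h) := by
                rw [hre, abs_mul, abs_of_pos (by positivity : (0:ℝ) < 1/((n:ℝ)*h^D))]
                apply mul_le_mul_of_nonneg_left _ (by positivity)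
                exact (Finset.abs_sum_le_sum_abs _ _).trans
                  (Finset.sum_le_sum (fun i _ => hterm i))
            _ = L * C * Real.sqrt D / h^(D+1) := by
                rw [Finset.sum_const, Finset.card_univ, Fintype.card_fin, nsmul_eq_mul,
                  pow_succ]
                field_simp
            _ ≤ δ := by
                rw [div_le_iff₀ (by positivity)]
                have h2e : C ≤ 2 * ε := hcase
                rw [hεdef] at h2e
                calc L * C * Real.sqrt D ≤ L * (2 * (δ * h ^ (D+1) / (2 * L * Real.sqrt D)))
                      * Real.sqrt D := by
                      apply mul_le_mul_of_nonneg_right _ hsD.le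
                      exact mul_le_mul_of_nonneg_left h2e hL.le
                  _ = δ * h ^ (D+1) := by field_simp
        have : (⨆ x ∈ S, |F x ω|) ≤ δ := by
          apply Real.iSup_le _ hδ.le
          intro x
          apply Real.iSup_le _ hδ.le
          intro hx
          exact hbF x hx
        simp only [Set.mem_setOf_eq] at hω
        linarith
      have hcompl0 : ∀ i : Fin n, μ (((X i) ⁻¹' S)ᶜ) = 0 := by
        intro i
        have hpre : μ ((X i) ⁻¹' S) = 1 := by
          rw [← Measure.map_apply (hmeas i) hSmeas, hlaw i, hsupp]
        rw [measure_compl ((hmeas i) hSmeas) (measure_ne_top _ _), hpre, measure_univ,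
          tsub_self]
      refine le_antisymm ?_ (zero_le')
      calc μ {ω | δ < ⨆ x ∈ S, |F x ω|} ≤ μ (⋃ i : Fin n, ((X i) ⁻¹' S)ᶜ) :=
            measure_mono hGsub
        _ ≤ ∑' i : Fin n, μ (((X i) ⁻¹' S)ᶜ) := measure_iUnion_le _
        _ = 0 := by simp [hcompl0]
    rw [hzero]
    simp only [ENNReal.toReal_zero]
    positivity
  · push_neg at hcase
    -- grid
    set M : ℕ := ⌈C / ε⌉₊ with hMdef
    have hM1 : 1 ≤ (M:ℝ) := by
      rw [hMdef]
      have : (1:ℝ) ≤ C / ε := by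
        rw [le_div_iff₀ hε]; linarith
      exact le_trans this (Nat.le_ceil _)
    have hMpos : (0:ℝ) < M := by linarith
    have hCM : C / M ≤ ε := by
      rw [div_le_iff₀ hMpos, hMdef]
      calc C = (C / ε) * ε := by field_simp
        _ ≤ (⌈C / ε⌉₊ : ℝ) * ε := by
            apply mul_le_mul_of_nonneg_right (Nat.le_ceil _) hε.le
        _ = ε * (⌈C / ε⌉₊ : ℝ) := by ring
    have hM2C : (M:ℝ) ≤ 2 * C / ε := by
      rw [hMdef]
      calc (⌈C / ε⌉₊ : ℝ) ≤ C / ε + 1 := (Nat.ceil_lt_add_one (by positivity)).le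
        _ ≤ 2 * C / ε := by
            rw [div_add' _ _ _ hε.ne']
            apply div_le_div_of_nonneg_right _ hε.le -- wrong direction lemma name? fix later
            linarith
    set z : (Fin D → Fin M) → EuclideanSpace ℝ (Fin D) :=
      fun j => WithLp.toLp 2 (fun i => ((j i : ℝ) + 1/2) * (C / M) : Fin D → ℝ) with hzdef
    have hM0 : 0 < M := by exact_mod_cast hMpos
    have hcover : ∀ x ∈ S, ∃ j : Fin D → Fin M, ‖x - z j‖ ≤ Real.sqrt D * ε / 2 := by
      intro x hx
      set s : ℝ := C / M with hs
      have hspos : 0 < s := by positivity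
      set j : Fin D → Fin M := fun i => ⟨min (⌊x i / s⌋₊) (M - 1),
        lt_of_le_of_lt (min_le_right _ _) (Nat.sub_lt hM0 one_pos)⟩ with hjdef
      refine ⟨j, ?_⟩
      have hcoord : ∀ i : Fin D, |x i - ((((min (⌊x i / s⌋₊) (M - 1) : ℕ) : ℝ)) + 1/2) * s|
          ≤ s / 2 := by
        intro i
        set k : ℕ := min (⌊x i / s⌋₊) (M - 1) with hk
        have hxi0 : 0 ≤ x i := (hx i).1
        have hxiC : x i ≤ C := (hx i).2
        have hk1 : (k:ℝ) * s ≤ x i := by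
          have h1 : (k:ℝ) ≤ ⌊x i / s⌋₊ := by exact_mod_cast min_le_left _ _
          have h2 : (⌊x i / s⌋₊ : ℝ) ≤ x i / s := Nat.floor_le (by positivity)
          calc (k:ℝ) * s ≤ (x i / s) * s := by
                apply mul_le_mul_of_nonneg_right (h1.trans h2) hspos.le
            _ = x i := by field_simp
        have hk2 : x i ≤ ((k:ℝ) + 1) * s := by
          rcases le_or_gt (⌊x i / s⌋₊) (M - 1) with hle | hlt
          · have hkeq : k = ⌊x i / s⌋₊ := min_eq_left hle
            have h2 : x i / s < ⌊x i / s⌋₊ + 1 := Nat.lt_floor_add_one _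
            rw [hkeq]
            calc x i = (x i / s) * s := by field_simp
              _ ≤ ((⌊x i / s⌋₊ : ℝ) + 1) * s := by
                  apply mul_le_mul_of_nonneg_right h2.le hspos.le
          · have hkeq : k = M - 1 := min_eq_right hlt.le
            have hM1' : ((M:ℕ) - 1 : ℕ) + 1 = M := Nat.succ_pred_eq_of_pos hM0
            have : ((k:ℝ) + 1) * s = (M:ℝ) * s := by
              rw [hkeq]
              congr 1
              have : (((M - 1 : ℕ) : ℝ)) + 1 = (((M - 1 : ℕ) + 1 : ℕ) : ℝ) := by push_cast; ring
              rw [this, hM1']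
            rw [this, hs]
            calc x i ≤ C := hxiC
              _ = (M:ℝ) * (C / M) := by field_simp
        rw [abs_le]
        constructor <;> [linarith; linarith]
      have hc2 : ∀ i : Fin D, |x i - (z j) i| ≤ s / 2 := by
        intro i
        have hzji : (z j) i = ((((min (⌊x i / s⌋₊) (M - 1) : ℕ) : ℝ)) + 1/2) * s := by
          simp only [hzdef, hjdef]
        rw [hzji]
        exact hcoord i
      have := hnormle x (z j) (s/2) (by positivity) hc2
      refine this.trans ?_
      have : s / 2 ≤ ε / 2 := by linarith [hCM]
      calc Real.sqrt D * (s/2) ≤ Real.sqrt D * (ε/2) :=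
            mul_le_mul_of_nonneg_left this hsD.le
        _ = Real.sqrt D * ε / 2 := by ring
    -- per grid point events
    set θ : ℝ := δ * h^D / 2 with hθdef
    have hθpos : 0 < θ := by positivity
    set Ev : Set Ω := {ω | δ < ⨆ x ∈ S, |F x ω|} with hEv
    set A : (Fin D → Fin M) → Set Ω := fun j =>
      {ω | (n:ℝ)*θ ≤ ∑ i, (K (‖z j - X i ω‖ / h) - ∫ ω', K (‖z j - X i ω'‖ / h) ∂μ)} with hA
    set A' : (Fin D → Fin M) → Set Ω := fun j =>
      {ω | (n:ℝ)*θ ≤ ∑ i, ((K 0 - K (‖z j - X i ω‖ / h)) -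
        ∫ ω', (K 0 - K (‖z j - X i ω'‖ / h)) ∂μ)} with hA'
    have hYmeas : ∀ (x : EuclideanSpace ℝ (Fin D)) (i : Fin n),
        Measurable (fun ω => K (‖x - X i ω‖ / h)) := fun x i => (hgmeas x).comp (hmeas i)
    have hYint : ∀ (x : EuclideanSpace ℝ (Fin D)) (i : Fin n),
        Integrable (fun ω => K (‖x - X i ω‖ / h)) μ := fun x i =>
      integrable_of_bdd (hYmeas x i) (M := K 0) (fun ω => by
        rw [abs_of_nonneg (hgbd x (X i ω)).1]; exact (hgbd x (X i ω)).2)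
    have hmi : ∀ (x : EuclideanSpace ℝ (Fin D)) (i : Fin n),
        ∫ ω', K (‖x - X i ω'‖ / h) ∂μ = ∫ u, K (‖x - u‖ / h) ∂P := by
      intro x i
      rw [← hlaw i, integral_map (hmeas i).aemeasurable (hgmeas x).aestronglyMeasurable]
    have hsub : Ev ⊆ ⋃ j : (Fin D → Fin M), (A j ∪ A' j) := by
      intro ω hω
      by_contra hnot
      simp only [Set.mem_iUnion, Set.mem_union, not_exists, not_or] at hnot
      have hzj : ∀ j : Fin D → Fin M, |F (z j) ω| ≤ δ / 2 := by
        intro j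
        obtain ⟨hn1, hn2⟩ := hnot j
        simp only [hA, Set.mem_setOf_eq, not_le] at hn1
        simp only [hA', Set.mem_setOf_eq, not_le] at hn2
        set T : ℝ := ∑ i : Fin n,
          (K (‖z j - X i ω‖ / h) - ∫ ω', K (‖z j - X i ω'‖ / h) ∂μ) with hT
        have hcon : ∀ i : Fin n, ∫ ω', (K 0 - K (‖z j - X i ω'‖ / h)) ∂μ
            = K 0 - ∫ ω', K (‖z j - X i ω'‖ / h) ∂μ := by
          intro i
          rw [integral_sub (integrable_const _) (hYint (z j) i), integral_const, probReal_univ,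
            one_smul]
        have hn2' : ∑ i : Fin n, ((K 0 - K (‖z j - X i ω‖ / h)) -
            ∫ ω', (K 0 - K (‖z j - X i ω'‖ / h)) ∂μ) = -T := by
          rw [hT, ← Finset.sum_neg_distrib]
          apply Finset.sum_congr rfl
          intro i _
          rw [hcon i]
          ring
        rw [hn2'] at hn2
        have habsT : |T| < (n:ℝ) * θ := abs_lt.mpr ⟨by linarith, by linarith⟩
        have hTeq : T = (∑ i : Fin n, K (‖z j - X i ω‖ / h))
            - (n:ℝ) * ∫ u, K (‖z j - u‖ / h) ∂P := by
          rw [hT, Finset.sum_sub_distrib]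
          congr 1
          rw [Finset.sum_congr rfl (fun i _ => hmi (z j) i), Finset.sum_const,
            Finset.card_univ, Fintype.card_fin, nsmul_eq_mul]
        have hFz : F (z j) ω = T / ((n:ℝ) * h^D) := by
          simp only [hFdef]
          rw [hTeq]
          field_simp
        rw [hFz, abs_div, abs_of_pos (by positivity : (0:ℝ) < (n:ℝ)*h^D)]
        rw [div_le_iff₀ (by positivity)]
        calc |T| ≤ (n:ℝ) * θ := habsT.le
          _ = δ / 2 * ((n:ℝ) * h^D) := by rw [hθdef]; ring
      have hboundall : ∀ x ∈ S, |F x ω| ≤ δ := by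
        intro x hx
        obtain ⟨j, hj⟩ := hcover x hx
        have hosc' : |F x ω - F (z j) ω| ≤ δ / 2 := by
          refine (hosc x (z j) ω).trans ?_
          calc 2 * L * ‖x - z j‖ / h^(D+1)
              ≤ 2 * L * (Real.sqrt D * ε / 2) / h^(D+1) := by
                apply div_le_div_of_nonneg_right _ hhD1.le
                exact mul_le_mul_of_nonneg_left hj (by positivity)
            _ = δ / 2 := by
                rw [hεdef]
                field_simp
        calc |F x ω| = |(F x ω - F (z j) ω) + F (z j) ω| := by congr 1; ring
          _ ≤ |F x ω - F (z j) ω| + |F (z j) ω| := abs_add_le _ _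
          _ ≤ δ / 2 + δ / 2 := add_le_add hosc' (hzj j)
          _ = δ := by ring
      have hsup : (⨆ x ∈ S, |F x ω|) ≤ δ := by
        apply Real.iSup_le _ hδ.le
        intro x
        apply Real.iSup_le _ hδ.le
        intro hx
        exact hboundall x hx
      rw [hEv, Set.mem_setOf_eq] at hω
      linarith
    have hexp : -(2*(n:ℝ)*θ^2/(K 0)^2) = -((n:ℝ) * δ ^ 2 * h ^ (2 * D)) / (2 * K 0 ^ 2) := by
      have hp2 : h^(2*D) = h^D * h^D := by rw [two_mul, pow_add]
      rw [hθdef, hp2]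
      field_simp
    have htail : ∀ j : (Fin D → Fin M),
        (μ (A j)).toReal + (μ (A' j)).toReal
          ≤ 2 * exp (-(n * δ ^ 2 * h ^ (2 * D)) / (2 * K 0 ^ 2)) := by
      intro j
      have hkmeas : Measurable (fun v : EuclideanSpace ℝ (Fin D) => Kc (‖z j - v‖ / h)) :=
        (hKcCont.comp (((continuous_const.sub continuous_id).norm).div_const h)).measurable
      have heqf : (fun (i : Fin n) (ω : Ω) => K (‖z j - X i ω‖ / h))
          = fun i => (fun v => Kc (‖z j - v‖ / h)) ∘ (X i) := by
        funext i ω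
        simp only [Function.comp_apply]
        rw [hKcK _ (by positivity)]
      have hindY : iIndepFun
          (fun (i : Fin n) (ω : Ω) => K (‖z j - X i ω‖ / h)) μ := by
        rw [heqf]
        exact hiid.comp _ (fun i => hkmeas)
      have hb1 := hoeffding_ineq μ (fun i ω => K (‖z j - X i ω‖ / h))
        (fun i => hYmeas (z j) i) hindY (K 0) hK0
        (fun i ω => hgbd (z j) (X i ω)) θ hθpos
      have heqf' : (fun (i : Fin n) (ω : Ω) => K 0 - K (‖z j - X i ω‖ / h))
          = fun i => (fun v => K 0 - Kc (‖z j - v‖ / h)) ∘ (X i) := by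
        funext i ω
        simp only [Function.comp_apply]
        rw [hKcK _ (by positivity)]
      have hindY' : iIndepFun
          (fun (i : Fin n) (ω : Ω) => K 0 - K (‖z j - X i ω‖ / h)) μ := by
        rw [heqf']
        exact hiid.comp _ (fun i => measurable_const.sub hkmeas)
      have hb2 := hoeffding_ineq μ (fun i ω => K 0 - K (‖z j - X i ω‖ / h))
        (fun i => measurable_const.sub (hYmeas (z j) i)) hindY' (K 0) hK0
        (fun i ω => ⟨by linarith [(hgbd (z j) (X i ω)).2],
          by linarith [(hgbd (z j) (X i ω)).1]⟩) θ hθpos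
      rw [hexp] at hb1 hb2
      have e1 : A j = {ω | (n:ℝ)*θ ≤ ∑ i, (K (‖z j - X i ω‖ / h)
          - ∫ ω', K (‖z j - X i ω'‖ / h) ∂μ)} := rfl
      have e2 : A' j = {ω | (n:ℝ)*θ ≤ ∑ i, ((K 0 - K (‖z j - X i ω‖ / h))
          - ∫ ω', (K 0 - K (‖z j - X i ω'‖ / h)) ∂μ)} := rfl
      rw [e1, e2]
      linarith [hb1, hb2]
    -- combine
    have hfin1 : μ Ev ≤ ∑ j : (Fin D → Fin M), (μ (A j) + μ (A' j)) := by
      calc μ Ev ≤ μ (⋃ j : (Fin D → Fin M), (A j ∪ A' j)) := measure_mono hsub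
        _ ≤ ∑' j : (Fin D → Fin M), μ (A j ∪ A' j) := measure_iUnion_le _
        _ ≤ ∑' j : (Fin D → Fin M), (μ (A j) + μ (A' j)) :=
            ENNReal.tsum_le_tsum (fun j => measure_union_le _ _)
        _ = ∑ j : (Fin D → Fin M), (μ (A j) + μ (A' j)) := tsum_fintype _
    have hne : ∀ j : (Fin D → Fin M), μ (A j) + μ (A' j) ≠ ⊤ := fun j =>
      ENNReal.add_ne_top.mpr ⟨measure_ne_top _ _, measure_ne_top _ _⟩
    have hsum_ne : (∑ j : (Fin D → Fin M), (μ (A j) + μ (A' j))) ≠ ⊤ :=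
      (ENNReal.sum_lt_top.mpr (fun j _ => lt_top_iff_ne_top.mpr (hne j))).ne
    have h2 : (μ Ev).toReal ≤ ∑ j : (Fin D → Fin M),
        ((μ (A j)).toReal + (μ (A' j)).toReal) := by
      calc (μ Ev).toReal ≤ (∑ j : (Fin D → Fin M), (μ (A j) + μ (A' j))).toReal :=
            ENNReal.toReal_mono hsum_ne hfin1
        _ = ∑ j : (Fin D → Fin M), ((μ (A j)).toReal + (μ (A' j)).toReal) := by
            rw [ENNReal.toReal_sum (fun j _ => hne j)]
            exact Finset.sum_congr rfl (fun j _ =>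
              ENNReal.toReal_add (measure_ne_top _ _) (measure_ne_top _ _))
    refine h2.trans ?_
    set e : ℝ := exp (-((n:ℝ) * δ ^ 2 * h ^ (2 * D)) / (2 * K 0 ^ 2)) with hedef
    have hMb : (M:ℝ) ≤ 4*C*L*Real.sqrt D/(δ*h^(D+1)) := by
      refine hM2C.trans ?_
      apply le_of_eq
      rw [hεdef]
      field_simp
      ring
    calc ∑ j : (Fin D → Fin M), ((μ (A j)).toReal + (μ (A' j)).toReal)
        ≤ ∑ _j : (Fin D → Fin M), (2 * e) := Finset.sum_le_sum (fun j _ => htail j)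
      _ = (Fintype.card (Fin D → Fin M) : ℝ) * (2 * e) := by
          rw [Finset.sum_const, Finset.card_univ, nsmul_eq_mul]
      _ = ((M:ℝ)^D) * (2 * e) := by
          rw [Fintype.card_fun, Fintype.card_fin, Fintype.card_fin]
          push_cast
          ring
      _ = 2 * ((M:ℝ)^D) * e := by ring
      _ ≤ 2 * (4*C*L*Real.sqrt D/(δ*h^(D+1)))^D * e := by
          apply mul_le_mul_of_nonneg_right _ (exp_pos _).le
          exact mul_le_mul_of_nonneg_left
            (pow_le_pow_left₀ (by positivity) hMb D) (by norm_num)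

end main
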